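/- Let η = (1, z, w, q₁, q₂, q₃) with ‖z‖ ≤ 1, wᵀ Q⁻¹ w ≤ 1 (Q ≻ 0), q₁ᵀq₁ ≤ x̂ᵀE₁ᵀE₁x̂, q₂ᵀq₂ ≤ zᵀΞᵀE₁ᵀE₁Ξz, q₃ᵀq₃ ≤ wᵀE₂ᵀE₂w. Suppose Γ is a matrix and P ≻ 0 such that Γᵀ P⁻¹ Γ ⪯ Θ, where Θ is the S-procedure certificate matrix diag(1 − τ₁ − τ₂ − τ₃ x̂ᵀE₁ᵀE₁x̂, τ₁I − τ₄ΞᵀE₁ᵀE₁Ξ, τ₂Q⁻¹ − τ₅E₂ᵀE₂, τ₃I, τ₄I, τ₅I) for some τ₁,…,τ₅ ≥ 0. Then (Γη)ᵀ P⁻¹ (Γη) ≤ 1. -/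

import Mathlib

open Matrix

/-- Euclidean norm of a vector in `ℝⁿ`. -/
noncomputable def enorm {n : ℕ} (v : Fin n → ℝ) : ℝ := Real.sqrt (∑ i, v i ^ 2)

/-- Block-diagonal matrix with six diagonal blocks. -/
def bd6 {a b c d e f : Type*} (A : Matrix a a ℝ) (B : Matrix b b ℝ)
    (C : Matrix c c ℝ) (D : Matrix d d ℝ) (E : Matrix e e ℝ)
    (F : Matrix f f ℝ) :
    Matrix (a ⊕ (b ⊕ (c ⊕ (d ⊕ (e ⊕ f))))) (a ⊕ (b ⊕ (c ⊕ (d ⊕ (e ⊕ f))))) ℝ :=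
  Matrix.fromBlocks A 0 0
    (Matrix.fromBlocks B 0 0
      (Matrix.fromBlocks C 0 0
        (Matrix.fromBlocks D 0 0
          (Matrix.fromBlocks E 0 0 F))))

theorem stmt16 {n w q₁ q₂ d₃ d₄ d₅ N : ℕ}
    (z : Fin n → ℝ) (wv : Fin w → ℝ)
    (qv₁ : Fin d₃ → ℝ) (qv₂ : Fin d₄ → ℝ) (qv₃ : Fin d₅ → ℝ)
    (xhat : Fin n → ℝ) (Ξ : Matrix (Fin n) (Fin n) ℝ)
    (E₁ : Matrix (Fin q₁) (Fin n) ℝ) (E₂ : Matrix (Fin q₂) (Fin w) ℝ)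
    (Q : Matrix (Fin w) (Fin w) ℝ) (hQ : Q.PosDef)
    (hz : _root_.enorm z ≤ 1)
    (hw : wv ⬝ᵥ (Q⁻¹ *ᵥ wv) ≤ 1)
    (hq₁ : qv₁ ⬝ᵥ qv₁ ≤ xhat ⬝ᵥ ((E₁ᵀ * E₁) *ᵥ xhat))
    (hq₂ : qv₂ ⬝ᵥ qv₂ ≤ z ⬝ᵥ ((Ξᵀ * E₁ᵀ * E₁ * Ξ) *ᵥ z))
    (hq₃ : qv₃ ⬝ᵥ qv₃ ≤ wv ⬝ᵥ ((E₂ᵀ * E₂) *ᵥ wv))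
    (τ₁ τ₂ τ₃ τ₄ τ₅ : ℝ)
    (hτ₁ : 0 ≤ τ₁) (hτ₂ : 0 ≤ τ₂) (hτ₃ : 0 ≤ τ₃) (hτ₄ : 0 ≤ τ₄) (hτ₅ : 0 ≤ τ₅)
    (Γ : Matrix (Fin N) (Fin 1 ⊕ (Fin n ⊕ (Fin w ⊕ (Fin d₃ ⊕ (Fin d₄ ⊕ Fin d₅))))) ℝ)
    (P : Matrix (Fin N) (Fin N) ℝ) (hP : P.PosDef)
    (hSproc : (bd6 ((1 - τ₁ - τ₂ - τ₃ * (xhat ⬝ᵥ ((E₁ᵀ * E₁) *ᵥ xhat))) • (1 : Matrix (Fin 1) (Fin 1) ℝ))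
        (τ₁ • (1 : Matrix (Fin n) (Fin n) ℝ) - τ₄ • (Ξᵀ * E₁ᵀ * E₁ * Ξ))
        (τ₂ • Q⁻¹ - τ₅ • (E₂ᵀ * E₂))
        (τ₃ • (1 : Matrix (Fin d₃) (Fin d₃) ℝ))
        (τ₄ • (1 : Matrix (Fin d₄) (Fin d₄) ℝ))
        (τ₅ • (1 : Matrix (Fin d₅) (Fin d₅) ℝ))
        - Γᵀ * P⁻¹ * Γ).PosSemidef) :
    (Γ *ᵥ (Sum.elim (fun _ => (1 : ℝ))
        (Sum.elim z (Sum.elim wv (Sum.elim qv₁ (Sum.elim qv₂ qv₃)))))) ⬝ᵥ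
      (P⁻¹ *ᵥ (Γ *ᵥ (Sum.elim (fun _ => (1 : ℝ))
        (Sum.elim z (Sum.elim wv (Sum.elim qv₁ (Sum.elim qv₂ qv₃))))))) ≤ 1 := by
  set η : Fin 1 ⊕ (Fin n ⊕ (Fin w ⊕ (Fin d₃ ⊕ (Fin d₄ ⊕ Fin d₅)))) → ℝ :=
    Sum.elim (fun _ => (1 : ℝ)) (Sum.elim z (Sum.elim wv (Sum.elim qv₁ (Sum.elim qv₂ qv₃)))) with hη
  have key := hSproc.dotProduct_mulVec_nonneg η
  have hzz : z ⬝ᵥ z ≤ 1 := by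
    have h0 : (0:ℝ) ≤ ∑ i, z i ^ 2 := Finset.sum_nonneg fun i _ => sq_nonneg _
    simp only [_root_.enorm] at hz
    have hs : ∑ i, z i ^ 2 ≤ 1 := by
      nlinarith [Real.sq_sqrt h0, hz, Real.sqrt_nonneg (∑ i, z i ^ 2)]
    calc z ⬝ᵥ z = ∑ i, z i ^ 2 := by simp [dotProduct, sq]
    _ ≤ 1 := hs
  -- rewrite key
  have hquad : η ⬝ᵥ ((Γᵀ * P⁻¹ * Γ) *ᵥ η)
      = (Γ *ᵥ η) ⬝ᵥ (P⁻¹ *ᵥ (Γ *ᵥ η)) := by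
    rw [← Matrix.mulVec_mulVec, ← Matrix.mulVec_mulVec, Matrix.dotProduct_mulVec,
      Matrix.vecMul_transpose]
  have hΘ : η ⬝ᵥ ((bd6 ((1 - τ₁ - τ₂ - τ₃ * (xhat ⬝ᵥ ((E₁ᵀ * E₁) *ᵥ xhat))) • (1 : Matrix (Fin 1) (Fin 1) ℝ))
        (τ₁ • (1 : Matrix (Fin n) (Fin n) ℝ) - τ₄ • (Ξᵀ * E₁ᵀ * E₁ * Ξ))
        (τ₂ • Q⁻¹ - τ₅ • (E₂ᵀ * E₂))
        (τ₃ • (1 : Matrix (Fin d₃) (Fin d₃) ℝ))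
        (τ₄ • (1 : Matrix (Fin d₄) (Fin d₄) ℝ))
        (τ₅ • (1 : Matrix (Fin d₅) (Fin d₅) ℝ))) *ᵥ η)
      = (1 - τ₁ - τ₂ - τ₃ * (xhat ⬝ᵥ ((E₁ᵀ * E₁) *ᵥ xhat)))
        + (τ₁ * (z ⬝ᵥ z) - τ₄ * (z ⬝ᵥ ((Ξᵀ * E₁ᵀ * E₁ * Ξ) *ᵥ z)))
        + (τ₂ * (wv ⬝ᵥ (Q⁻¹ *ᵥ wv)) - τ₅ * (wv ⬝ᵥ ((E₂ᵀ * E₂) *ᵥ wv)))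
        + τ₃ * (qv₁ ⬝ᵥ qv₁) + τ₄ * (qv₂ ⬝ᵥ qv₂) + τ₅ * (qv₃ ⬝ᵥ qv₃) := by
    simp [hη, bd6, fromBlocks_mulVec, sumElim_dotProduct_sumElim, sub_mulVec,
      smul_mulVec, dotProduct_smul, dotProduct_sub, smul_eq_mul, Fin.sum_univ_one,
      dotProduct, Finset.sum_sub_distrib, Finset.mul_sum, sq, mul_sub,
      mul_comm, mul_left_comm, mul_assoc]
    ring
  simp only [star_trivial] at key
  rw [Matrix.sub_mulVec, dotProduct_sub, hΘ, hquad] at key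
  nlinarith [key]
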